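/- arXiv:1712.09622 — 3 statements merged into one kernel-verified Lean document; each statement's English description precedes it below -/
import Mathlib

section
/- Under the same hypotheses as the averaging lemma, moreover f(x) + g(b₂·x) = 0 for all x. -/
theorem stmt_3 (m : ℕ) (hm : 0 < m) (f g : ZMod m → ℚ) (b₁ b₂ : (ZMod m)ˣ)
    (h₁ : ∀ x : ZMod m, 0 ≤ f x + g ((b₁ : ZMod m) * x))
    (h₂ : ∀ x : ZMod m, f x + g ((b₂ : ZMod m) * x) ≤ 0) :
    ∀ x : ZMod m, f x + g ((b₂ : ZMod m) * x) = 0 := by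
  haveI : NeZero m := ⟨hm.ne'⟩
  have key : ∀ b : (ZMod m)ˣ, ∑ x : ZMod m, (f x + g ((b : ZMod m) * x))
      = ∑ x : ZMod m, f x + ∑ x : ZMod m, g x := by
    intro b
    rw [Finset.sum_add_distrib]
    congr 1
    exact Equiv.sum_comp (Units.mulLeft b) g
  have hsum : ∑ x : ZMod m, (f x + g ((b₂ : ZMod m) * x)) = 0 := by
    have h1 : 0 ≤ ∑ x : ZMod m, (f x + g ((b₁ : ZMod m) * x)) :=
      Finset.sum_nonneg fun x _ => h₁ x
    have h2 : ∑ x : ZMod m, (f x + g ((b₂ : ZMod m) * x)) ≤ 0 :=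
      Finset.sum_nonpos fun x _ => h₂ x
    rw [key] at h1 ⊢
    linarith [key b₂]
  intro x
  have := (Finset.sum_eq_zero_iff_of_nonpos (fun x _ => h₂ x)).mp ?_ x (Finset.mem_univ x)
  · exact this
  · exact hsum
end

section
/- Let m be a squarefree positive integer and let G be a subgroup of (ZMod m) × (ZMod m) of order m such that x₁·x₂ + y₁·y₂ = 0 in ZMod m for all (x₁, y₁), (x₂, y₂) ∈ G. If G contains an element of the form (1, b), then b² + 1 = 0 in ZMod m and G is the cyclic subgroup generated by (1, b). -/
theorem stmt_10 (m : ℕ) (hm : 0 < m) (hsf : Squarefree m)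
    (G : Submodule (ZMod m) ((ZMod m) × (ZMod m))) (hcard : Nat.card G = m)
    (hform : ∀ u ∈ G, ∀ v ∈ G, u.1 * v.1 + u.2 * v.2 = 0)
    (b : ZMod m) (hb : (1, b) ∈ G) :
    b ^ 2 + 1 = 0 ∧ G = Submodule.span (ZMod m) {((1 : ZMod m), b)} := by
  have hred : IsReduced (ZMod m) := isReduced_zmod.mpr (Or.inl hsf)
  have h1 := hform (1, b) hb (1, b) hb
  simp only at h1
  constructor
  · linear_combination h1
  · apply le_antisymm
    · intro u hu
      have hw : u - u.1 • (1, b) ∈ G := G.sub_mem hu (G.smul_mem _ hb)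
      have h2 := hform _ hw _ hw
      have hw1 : (u - u.1 • (1, b)).1 = 0 := by simp
      rw [hw1] at h2
      simp only [zero_mul, zero_add] at h2
      have h3 : (u - u.1 • (1, b)).2 = 0 :=
        hred.eq_zero _ ⟨2, by rw [pow_two]; exact h2⟩
      have hu2 : u = u.1 • (1, b) := by
        have h4 : u - u.1 • (1, b) = 0 := Prod.ext hw1 h3
        rw [sub_eq_zero] at h4
        exact h4
      rw [hu2]
      exact Submodule.smul_mem _ _ (Submodule.mem_span_singleton_self _)
    · rw [Submodule.span_le, Set.singleton_subset_iff]; exact hb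
end

section
/- Let m be a squarefree positive integer and let G be a subgroup of (ZMod m) × (ZMod m) of order m on which the form ((x₁,y₁),(x₂,y₂)) ↦ x₁x₂ + y₁y₂ vanishes identically. Then there exists b ∈ ZMod m with b² + 1 = 0 such that G = {(x, b·x) : x ∈ ZMod m}. -/
theorem stmt_11 (m : ℕ) (hm : 0 < m) (hodd : Odd m) (hsf : Squarefree m)
    (G : AddSubgroup ((ZMod m) × (ZMod m))) (hcard : Nat.card G = m)
    (hform : ∀ u ∈ G, ∀ v ∈ G, u.1 * v.1 + u.2 * v.2 = 0) :
    ∃ b : ZMod m, b ^ 2 + 1 = 0 ∧ G = AddSubgroup.closure {((1 : ZMod m), b)} := by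
  haveI : NeZero m := ⟨hm.ne'⟩
  -- a key fact: squares vanish only at 0
  have key : ∀ y : ZMod m, y * y = 0 → y = 0 := by
    intro y hy
    have h1 : ((y.val * y.val : ℕ) : ZMod m) = 0 := by
      push_cast [ZMod.natCast_val, ZMod.cast_id]; exact hy
    rw [ZMod.natCast_eq_zero_iff] at h1
    have h2 : m ∣ y.val ^ 2 := by rwa [sq]
    rw [Squarefree.dvd_pow_iff_dvd hsf two_ne_zero] at h2
    calc y = ((y.val : ℕ) : ZMod m) := by rw [ZMod.natCast_val, ZMod.cast_id]
    _ = 0 := by rwa [ZMod.natCast_eq_zero_iff]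
  set f : G →+ ZMod m := (AddMonoidHom.fst _ _).comp G.subtype with hf
  have hinj : Function.Injective f := by
    rw [injective_iff_map_eq_zero]
    rintro ⟨u, hu⟩ h
    have h2 := hform u hu u hu
    have h1 : u.1 = 0 := h
    rw [h1] at h2
    simp only [mul_zero, zero_add] at h2
    have h3 : u.2 = 0 := key _ h2
    ext <;> simp [h1, h3]
  have hbij : Function.Bijective f := by
    rw [Nat.bijective_iff_injective_and_card]
    exact ⟨hinj, by simp [hcard, Nat.card_zmod]⟩
  obtain ⟨⟨g, hg⟩, hgf⟩ := hbij.2 1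
  have hg1 : g.1 = 1 := hgf
  refine ⟨g.2, ?_, ?_⟩
  · have h2 := hform g hg g hg
    rw [hg1] at h2
    linear_combination h2
  · have hgeq : g = ((1 : ZMod m), g.2) := by ext <;> simp [hg1]
    apply le_antisymm
    · intro u hu
      have hmem : u.1.val • (⟨g, hg⟩ : G) ∈ (⊤ : AddSubgroup G) := trivial
      have hcast : ((u.1.val : ℕ) : ZMod m) = u.1 := by
        rw [ZMod.natCast_val, ZMod.cast_id]
      have heq : (⟨u, hu⟩ : G) = u.1.val • ⟨g, hg⟩ := by
        apply hinj
        show u.1 = (u.1.val • g).1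
        simp [hg1, hcast]
      have : u = u.1.val • g := congrArg Subtype.val heq
      rw [this, hgeq]
      exact AddSubgroup.nsmul_mem _ (AddSubgroup.subset_closure (by simp)) _
    · rw [AddSubgroup.closure_le, Set.singleton_subset_iff]
      rw [← hgeq]; exact hg
end
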